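/- Let x be a solution of the random time change equation and let F : ℝ^d → ℝ be continuously differentiable. Then for every t ≥ 0, denoting by J_t the (finite) set of discontinuity points of x in (0,t] and by x(s−) the left limit of x at s, one has the pathwise change-of-variables formula F(x(t)) − F(x(0)) = ∫_0^t DF(x(s))[f(x(s))] ds + Σ_{s∈J_t} (F(x(s)) − F(x(s−))), where DF(z)[v] denotes the derivative of F at z applied to the vector v. (Deterministic, pathwise core of the Itô formula of Lemma 2.3.) -/

import Mathlib

open MeasureTheory Filter

noncomputable section

/-- A counting function: nondecreasing, right-continuous `y : [0,∞) → ℕ` with `y 0 = 0`. -/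
def IsCountingFunction (y : ℝ → ℕ) : Prop :=
  MonotoneOn y (Set.Ici 0) ∧ y 0 = 0 ∧
    ∀ t : ℝ, 0 ≤ t → ContinuousWithinAt y (Set.Ici t) t

/-- Right-continuous on `[0,∞)` with left limits at every `t > 0`. -/
def IsCadlag {E : Type*} [TopologicalSpace E] (x : ℝ → E) : Prop :=
  (∀ t : ℝ, 0 ≤ t → ContinuousWithinAt x (Set.Ici t) t) ∧
  (∀ t : ℝ, 0 < t → ∃ L : E, Tendsto x (nhdsWithin t (Set.Iio t)) (nhds L))

/-- Solution of the random time change equation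
`x t = x₀ + ∫₀ᵗ f(x s) ds + ∑ₖ yₖ(∫₀ᵗ λₖ(x s) ds) • νₖ`. -/
def IsRTESolution {d p : ℕ} (f : EuclideanSpace ℝ (Fin d) → EuclideanSpace ℝ (Fin d))
    (lam : Fin p → EuclideanSpace ℝ (Fin d) → ℝ)
    (ν : Fin p → EuclideanSpace ℝ (Fin d))
    (y : Fin p → ℝ → ℕ) (x₀ : EuclideanSpace ℝ (Fin d))
    (x : ℝ → EuclideanSpace ℝ (Fin d)) : Prop :=
  IsCadlag x ∧ ∀ t : ℝ, 0 ≤ t →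
    x t = x₀ + (∫ s in (0:ℝ)..t, f (x s)) +
      ∑ k, ((y k (∫ s in (0:ℝ)..t, lam k (x s)) : ℝ)) • ν k

/-- Pathwise change-of-variables (Itô) formula for solutions of the RTE. -/
theorem rte_change_of_variables (d p : ℕ)
    (ν : Fin p → EuclideanSpace ℝ (Fin d))
    (f : EuclideanSpace ℝ (Fin d) → EuclideanSpace ℝ (Fin d))
    (hf_lip : ∃ K : NNReal, LipschitzWith K f)
    (hf_bdd : ∃ B : ℝ, ∀ z, ‖f z‖ ≤ B)
    (lam : Fin p → EuclideanSpace ℝ (Fin d) → ℝ)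
    (hlam_lip : ∀ k, ∃ K : NNReal, LipschitzWith K (lam k))
    (hlam_bdd : ∀ k, ∃ B : ℝ, ∀ z, lam k z ≤ B)
    (hlam_nonneg : ∀ k z, 0 ≤ lam k z)
    (y : Fin p → ℝ → ℕ) (hy : ∀ k, IsCountingFunction (y k))
    (x₀ : EuclideanSpace ℝ (Fin d)) (x : ℝ → EuclideanSpace ℝ (Fin d))
    (hx : IsRTESolution f lam ν y x₀ x)
    (F : EuclideanSpace ℝ (Fin d) → ℝ) (hF : ContDiff ℝ 1 F)
    (t : ℝ) (ht : 0 ≤ t)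
    (hJfin : ({s ∈ Set.Ioc 0 t | ¬ ContinuousAt x s}).Finite)
    (xm : ℝ → EuclideanSpace ℝ (Fin d))
    (hxm : ∀ s : ℝ, 0 < s → Tendsto x (nhdsWithin s (Set.Iio s)) (nhds (xm s))) :
    F (x t) - F (x 0)
      = (∫ s in (0:ℝ)..t, fderiv ℝ F (x s) (f (x s)))
        + ∑ s ∈ hJfin.toFinset, (F (x s) - F (xm s)) := by
  classical
  obtain ⟨hxcad, hxeq⟩ := hx
  obtain ⟨B, hB⟩ := hf_bdd
  obtain ⟨Kf, hKf⟩ := hf_lip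
  have hf_cont : Continuous f := hKf.continuous
  have hlam_cont : ∀ k, Continuous (lam k) := fun k => (hlam_lip k).choose_spec.continuous
  have hF1 : Differentiable ℝ F := hF.differentiable one_ne_zero
  have hDF : Continuous (fderiv ℝ F) := hF.continuous_fderiv one_ne_zero
  have hmemT : ∀ s : ℝ, s ∈ hJfin.toFinset ↔ (s ∈ Set.Ioc 0 t ∧ ¬ ContinuousAt x s) :=
    fun s => hJfin.mem_toFinset
  -- measurability of x on [0,t]
  have hxmeas : AEStronglyMeasurable x (volume.restrict (Set.Icc 0 t)) := by
    have hcont : ContinuousOn x (Set.Icc 0 t \ {s | s ∈ Set.Ioc 0 t ∧ ¬ ContinuousAt x s}) := by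
      intro u hu
      rcases eq_or_lt_of_le hu.1.1 with h0 | h0
      · exact (hxcad.1 u (le_of_eq h0)).mono
          (fun r hr => h0 ▸ hr.1.1)
      · have : ContinuousAt x u := by
          by_contra hc
          exact hu.2 ⟨⟨h0, hu.1.2⟩, hc⟩
        exact this.continuousWithinAt
    have hmeasset : MeasurableSet (Set.Icc 0 t \ {s | s ∈ Set.Ioc 0 t ∧ ¬ ContinuousAt x s}) :=
      measurableSet_Icc.diff hJfin.measurableSet
    have h1 : AEStronglyMeasurable x (volume.restrict (Set.Icc 0 t \ {s | s ∈ Set.Ioc 0 t ∧ ¬ ContinuousAt x s})) := hcont.aestronglyMeasurable hmeasset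
    have h2 : (Set.Icc 0 t \ {s | s ∈ Set.Ioc 0 t ∧ ¬ ContinuousAt x s} : Set ℝ)
        =ᵐ[volume] Set.Icc 0 t := by
      refine Filter.eventuallyEq_of_mem (MeasureTheory.measure_eq_zero_iff_ae_notMem.mp
        (hJfin.measure_zero volume)) ?_
      intro r hr
      simp only [eq_iff_iff, Set.mem_diff]
      exact ⟨fun h => h.1, fun h => ⟨h, hr⟩⟩
    rwa [Measure.restrict_congr_set h2] at h1
  -- integrability machinery
  have hkey : ∀ {α : Type} [inst : NormedAddCommGroup α] (g : ℝ → α) (M : ℝ),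
      AEStronglyMeasurable g (volume.restrict (Set.Icc 0 t)) →
      (∀ u ∈ Set.Icc (0:ℝ) t, ‖g u‖ ≤ M) →
      ∀ a ∈ Set.Icc (0:ℝ) t, ∀ b ∈ Set.Icc (0:ℝ) t, IntervalIntegrable g volume a b := by
    intro α _ g M hmeas hbd a ha b hb
    have hInt : IntegrableOn g (Set.Icc 0 t) volume :=
      ⟨hmeas, HasFiniteIntegral.restrict_of_bounded (C := M)
        (by simp [Real.volume_Icc])
        ((ae_restrict_iff' measurableSet_Icc).2 (Filter.Eventually.of_forall hbd))⟩
    refine (hInt.mono_set ?_).intervalIntegrable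
    rw [← Set.uIcc_of_le ht]
    exact Set.uIcc_subset_uIcc ((Set.uIcc_of_le ht) ▸ ha) ((Set.uIcc_of_le ht) ▸ hb)
  have hmf : ∀ a ∈ Set.Icc (0:ℝ) t, ∀ b ∈ Set.Icc (0:ℝ) t,
      IntervalIntegrable (fun s => f (x s)) volume a b :=
    hkey _ B (hf_cont.comp_aestronglyMeasurable hxmeas) (fun u _ => hB _)
  have hml : ∀ k, ∀ a ∈ Set.Icc (0:ℝ) t, ∀ b ∈ Set.Icc (0:ℝ) t,
      IntervalIntegrable (fun s => lam k (x s)) volume a b := by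
    intro k
    refine hkey _ (hlam_bdd k).choose ((hlam_cont k).comp_aestronglyMeasurable hxmeas) ?_
    intro u _
    rw [Real.norm_eq_abs, abs_of_nonneg (hlam_nonneg k _)]
    exact (hlam_bdd k).choose_spec _
  have hB0 : 0 ≤ B := le_trans (norm_nonneg _) (hB x₀)
  -- monotonicity of the time changes
  have htau_mono : ∀ k, ∀ a ∈ Set.Icc (0:ℝ) t, ∀ b ∈ Set.Icc (0:ℝ) t, a ≤ b →
      (∫ s in (0:ℝ)..a, lam k (x s)) ≤ ∫ s in (0:ℝ)..b, lam k (x s) := by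
    intro k a ha b hb hab
    have h1 := intervalIntegral.integral_add_adjacent_intervals
      (hml k 0 ⟨le_rfl, ht⟩ a ha) (hml k a ha b hb)
    have h2 : 0 ≤ ∫ s in a..b, lam k (x s) :=
      intervalIntegral.integral_nonneg hab (fun u _ => hlam_nonneg k _)
    linarith
  have htau0 : ∀ k, ∀ u ∈ Set.Icc (0:ℝ) t, 0 ≤ ∫ s in (0:ℝ)..u, lam k (x s) := by
    intro k u hu
    have := htau_mono k 0 ⟨le_rfl, ht⟩ u hu hu.1
    simpa using this
  have hn_mono : ∀ k, ∀ a ∈ Set.Icc (0:ℝ) t, ∀ b ∈ Set.Icc (0:ℝ) t, a ≤ b →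
      y k (∫ s in (0:ℝ)..a, lam k (x s)) ≤ y k (∫ s in (0:ℝ)..b, lam k (x s)) :=
    fun k a ha b hb hab => (hy k).1 (htau0 k a ha) (htau0 k b hb) (htau_mono k a ha b hb hab)
  -- bound on x over [0,t]
  have hxbdd : ∀ u ∈ Set.Icc (0:ℝ) t, ‖x u‖ ≤
      ‖x₀‖ + B * t + ∑ k, (y k (∫ s in (0:ℝ)..t, lam k (x s)) : ℝ) * ‖ν k‖ := by
    intro u hu
    rw [hxeq u hu.1]
    have h1 : ‖∫ s in (0:ℝ)..u, f (x s)‖ ≤ B * t := by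
      refine le_trans (intervalIntegral.norm_integral_le_of_norm_le_const
        (fun r _ => hB (x r))) ?_
      rw [sub_zero, abs_of_nonneg hu.1]
      exact mul_le_mul_of_nonneg_left hu.2 hB0
    have h2 : ‖∑ k, ((y k (∫ s in (0:ℝ)..u, lam k (x s)) : ℝ)) • ν k‖ ≤
        ∑ k, (y k (∫ s in (0:ℝ)..t, lam k (x s)) : ℝ) * ‖ν k‖ := by
      refine le_trans (norm_sum_le _ _) (Finset.sum_le_sum (fun k _ => ?_))
      rw [norm_smul, Real.norm_eq_abs, Nat.abs_cast]
      refine mul_le_mul_of_nonneg_right ?_ (norm_nonneg _)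
      exact_mod_cast hn_mono k u hu t ⟨ht, le_rfl⟩ hu.2
    calc ‖x₀ + (∫ s in (0:ℝ)..u, f (x s)) + ∑ k, ((y k (∫ s in (0:ℝ)..u, lam k (x s)) : ℝ)) • ν k‖
        ≤ ‖x₀ + (∫ s in (0:ℝ)..u, f (x s))‖ + ‖∑ k, ((y k (∫ s in (0:ℝ)..u, lam k (x s)) : ℝ)) • ν k‖ :=
          norm_add_le _ _
      _ ≤ ‖x₀‖ + ‖∫ s in (0:ℝ)..u, f (x s)‖ + ‖∑ k, ((y k (∫ s in (0:ℝ)..u, lam k (x s)) : ℝ)) • ν k‖ := by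
          have := norm_add_le x₀ (∫ s in (0:ℝ)..u, f (x s)); linarith
      _ ≤ ‖x₀‖ + B * t + ∑ k, (y k (∫ s in (0:ℝ)..t, lam k (x s)) : ℝ) * ‖ν k‖ := by linarith
  -- bound on the derivative term
  obtain ⟨M, hM⟩ : ∃ M, ∀ z ∈ Metric.closedBall (0 : EuclideanSpace ℝ (Fin d))
      (‖x₀‖ + B * t + ∑ k, (y k (∫ s in (0:ℝ)..t, lam k (x s)) : ℝ) * ‖ν k‖),
      ‖fderiv ℝ F z‖ ≤ M :=
    (isCompact_closedBall _ _).exists_bound_of_continuousOn hDF.continuousOn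
  have hxball : ∀ u ∈ Set.Icc (0:ℝ) t, x u ∈ Metric.closedBall (0 : EuclideanSpace ℝ (Fin d))
      (‖x₀‖ + B * t + ∑ k, (y k (∫ s in (0:ℝ)..t, lam k (x s)) : ℝ) * ‖ν k‖) := by
    intro u hu
    rw [Metric.mem_closedBall, dist_zero_right]
    exact hxbdd u hu
  have hM0 : 0 ≤ M := le_trans (norm_nonneg _) (hM (x 0) (hxball 0 ⟨le_rfl, ht⟩))
  have hmh : ∀ a ∈ Set.Icc (0:ℝ) t, ∀ b ∈ Set.Icc (0:ℝ) t,
      IntervalIntegrable (fun s => fderiv ℝ F (x s) (f (x s))) volume a b := by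
    refine hkey _ (M * B) ((hDF.clm_apply hf_cont).comp_aestronglyMeasurable hxmeas) ?_
    intro u hu
    refine le_trans ((fderiv ℝ F (x u)).le_opNorm _) ?_
    exact mul_le_mul (hM _ (hxball u hu)) (hB _) (norm_nonneg _) hM0
  -- neighborhood facts
  have hIccmem : ∀ u ∈ Set.Ico (0:ℝ) t, Set.Icc (0:ℝ) t ∈ nhdsWithin u (Set.Ici u) := by
    intro u hu
    refine mem_nhdsWithin.2 ⟨Set.Iio t, isOpen_Iio, hu.2, ?_⟩
    rintro r ⟨h1, h2⟩
    exact ⟨hu.1.trans h2, le_of_lt h1⟩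
  have hIoimem : ∀ u ∈ Set.Ico (0:ℝ) t, Set.Icc (0:ℝ) t ∈ nhdsWithin u (Set.Ioi u) :=
    fun u hu => nhdsWithin_mono u Set.Ioi_subset_Ici_self (hIccmem u hu)
  -- right FTC derivatives
  have hc_deriv : ∀ u ∈ Set.Ico (0:ℝ) t,
      HasDerivWithinAt (fun r => ∫ s in (0:ℝ)..r, f (x s)) (f (x u)) (Set.Ici u) u := by
    intro u hu
    exact intervalIntegral.integral_hasDerivWithinAt_right
      (hmf 0 ⟨le_rfl, ht⟩ u ⟨hu.1, hu.2.le⟩)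
      ⟨Set.Icc 0 t, hIoimem u hu, hf_cont.comp_aestronglyMeasurable hxmeas⟩
      ((hf_cont.continuousAt.comp_continuousWithinAt (hxcad.1 u hu.1)).mono Set.Ioi_subset_Ici_self)
  have hPhi_deriv : ∀ u ∈ Set.Ico (0:ℝ) t,
      HasDerivWithinAt (fun r => ∫ s in (0:ℝ)..r, fderiv ℝ F (x s) (f (x s)))
        (fderiv ℝ F (x u) (f (x u))) (Set.Ici u) u := by
    intro u hu
    exact intervalIntegral.integral_hasDerivWithinAt_right
      (hmh 0 ⟨le_rfl, ht⟩ u ⟨hu.1, hu.2.le⟩)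
      ⟨Set.Icc 0 t, hIoimem u hu, (hDF.clm_apply hf_cont).comp_aestronglyMeasurable hxmeas⟩
      (((hDF.clm_apply hf_cont).continuousAt.comp_continuousWithinAt (hxcad.1 u hu.1)).mono
        Set.Ioi_subset_Ici_self)
  -- continuity of primitives on [0,t]
  have hPhi_cont : ContinuousOn (fun r => ∫ s in (0:ℝ)..r, fderiv ℝ F (x s) (f (x s)))
      (Set.Icc 0 t) := by
    have := intervalIntegral.continuousOn_primitive_interval'
      (hmh 0 ⟨le_rfl, ht⟩ t ⟨ht, le_rfl⟩) Set.left_mem_uIcc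
    rwa [Set.uIcc_of_le ht] at this
  have htau_cont : ∀ k, ContinuousOn (fun r => ∫ s in (0:ℝ)..r, lam k (x s))
      (Set.Icc 0 t) := by
    intro k
    have := intervalIntegral.continuousOn_primitive_interval'
      (hml k 0 ⟨le_rfl, ht⟩ t ⟨ht, le_rfl⟩) Set.left_mem_uIcc
    rwa [Set.uIcc_of_le ht] at this
  -- the counting terms are eventually constant to the right
  have hn_right : ∀ k, ∀ u ∈ Set.Ico (0:ℝ) t, ∀ᶠ r in nhdsWithin u (Set.Ici u),
      y k (∫ s in (0:ℝ)..r, lam k (x s)) = y k (∫ s in (0:ℝ)..u, lam k (x s)) := by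
    intro k u hu
    have hτ0 : 0 ≤ ∫ s in (0:ℝ)..u, lam k (x s) := htau0 k u ⟨hu.1, hu.2.le⟩
    have hycw := (hy k).2.2 _ hτ0
    rw [ContinuousWithinAt, nhds_discrete, tendsto_pure] at hycw
    obtain ⟨W, hWopen, hWmem, hWsub⟩ := mem_nhdsWithin.1 hycw
    have hτten : Tendsto (fun r => ∫ s in (0:ℝ)..r, lam k (x s)) (nhdsWithin u (Set.Ici u))
        (nhds (∫ s in (0:ℝ)..u, lam k (x s))) :=
      ((htau_cont k) u ⟨hu.1, hu.2.le⟩).mono_of_mem_nhdsWithin (hIccmem u hu)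
    have hWev := hτten (hWopen.mem_nhds hWmem)
    filter_upwards [hWev, eventually_mem_nhdsWithin,
      (hIccmem u hu : ∀ᶠ r in nhdsWithin u (Set.Ici u), r ∈ Set.Icc 0 t)] with r h1 h2 h3
    exact hWsub ⟨h1, htau_mono k u ⟨hu.1, hu.2.le⟩ r h3 h2⟩
  -- right derivative of F ∘ x
  have hFx_deriv : ∀ u ∈ Set.Ico (0:ℝ) t,
      HasDerivWithinAt (fun r => F (x r)) (fderiv ℝ F (x u) (f (x u))) (Set.Ici u) u := by
    intro u hu
    have hxev : ∀ᶠ r in nhdsWithin u (Set.Ici u),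
        x r = x₀ + (∫ s in (0:ℝ)..r, f (x s)) +
          ∑ k, ((y k (∫ s in (0:ℝ)..u, lam k (x s)) : ℝ)) • ν k := by
      have hall : ∀ᶠ r in nhdsWithin u (Set.Ici u), ∀ k,
          y k (∫ s in (0:ℝ)..r, lam k (x s)) = y k (∫ s in (0:ℝ)..u, lam k (x s)) :=
        eventually_all.2 (fun k => hn_right k u hu)
      filter_upwards [hall, eventually_mem_nhdsWithin] with r h1 h2
      rw [hxeq r (le_trans hu.1 h2)]
      congr 1
      exact Finset.sum_congr rfl (fun k _ => by rw [h1 k])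
    have hx_d : HasDerivWithinAt x (f (x u)) (Set.Ici u) u := by
      have base : HasDerivWithinAt (fun r => x₀ + (∫ s in (0:ℝ)..r, f (x s)) +
          ∑ k, ((y k (∫ s in (0:ℝ)..u, lam k (x s)) : ℝ)) • ν k) (f (x u)) (Set.Ici u) u :=
        ((hc_deriv u hu).const_add x₀).add_const _
      exact base.congr_of_eventuallyEq hxev (hxeq u hu.1)
    exact (hF1 (x u)).hasFDerivAt.comp_hasDerivWithinAt u hx_d
  -- the jump sum is eventually constant to the right
  have hJS_right : ∀ u : ℝ, ∀ᶠ r in nhdsWithin u (Set.Ici u),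
      (∑ s ∈ hJfin.toFinset.filter (fun s' => s' ≤ r), (F (x s) - F (xm s)))
        = ∑ s ∈ hJfin.toFinset.filter (fun s' => s' ≤ u), (F (x s) - F (xm s)) := by
    intro u
    have hall : ∀ᶠ r in nhdsWithin u (Set.Ici u), ∀ s ∈ hJfin.toFinset, (s ≤ r ↔ s ≤ u) := by
      rw [Filter.eventually_all_finset]
      intro s _
      rcases le_or_gt s u with hs | hs
      · filter_upwards [eventually_mem_nhdsWithin] with r hr
        exact ⟨fun _ => hs, fun _ => le_trans hs hr⟩
      · have : Set.Iio s ∈ nhdsWithin u (Set.Ici u) :=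
          nhdsWithin_le_nhds (Iio_mem_nhds hs)
        filter_upwards [this] with r hr
        exact ⟨fun h => absurd (lt_of_le_of_lt h hr) (lt_irrefl s), fun h => absurd hs (not_lt.2 h)⟩
    filter_upwards [hall] with r hr
    have heq : hJfin.toFinset.filter (fun s' => s' ≤ r) = hJfin.toFinset.filter (fun s' => s' ≤ u) :=
      Finset.filter_congr (by intro s hs; exact hr s hs)
    rw [heq]
  have hJS_hasDeriv : ∀ u : ℝ, HasDerivWithinAt
      (fun r => ∑ s ∈ hJfin.toFinset.filter (fun s' => s' ≤ r), (F (x s) - F (xm s)))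
      0 (Set.Ici u) u :=
    fun u => (hasDerivWithinAt_const u _ _).congr_of_eventuallyEq (hJS_right u) rfl
  -- the combined function g has vanishing right derivative
  have hg_deriv : ∀ u ∈ Set.Ico (0:ℝ) t, HasDerivWithinAt
      (fun r => F (x r) - (∫ s in (0:ℝ)..r, fderiv ℝ F (x s) (f (x s)))
        - ∑ s ∈ hJfin.toFinset.filter (fun s' => s' ≤ r), (F (x s) - F (xm s)))
      0 (Set.Ici u) u := by
    intro u hu
    have := ((hFx_deriv u hu).sub (hPhi_deriv u hu)).sub (hJS_hasDeriv u)
    simpa [Pi.sub_def] using this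
  -- left limit of the jump sum
  have hJS_left : ∀ u ∈ Set.Ioc (0:ℝ) t, Tendsto
      (fun r => ∑ s ∈ hJfin.toFinset.filter (fun s' => s' ≤ r), (F (x s) - F (xm s)))
      (nhdsWithin u (Set.Iio u))
      (nhds (∑ s ∈ hJfin.toFinset.filter (fun s' => s' < u), (F (x s) - F (xm s)))) := by
    intro u _
    have hall : ∀ᶠ r in nhdsWithin u (Set.Iio u), ∀ s ∈ hJfin.toFinset, (s ≤ r ↔ s < u) := by
      rw [Filter.eventually_all_finset]
      intro s _
      rcases lt_or_ge s u with hs | hs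
      · have : Set.Ioi s ∈ nhdsWithin u (Set.Iio u) := nhdsWithin_le_nhds (Ioi_mem_nhds hs)
        filter_upwards [this] with r hr
        exact ⟨fun _ => hs, fun _ => le_of_lt hr⟩
      · filter_upwards [eventually_mem_nhdsWithin] with r hr
        constructor
        · intro h; exact absurd (lt_of_le_of_lt h hr) (not_lt.2 hs)
        · intro h; exact absurd hs (not_le.2 h)
    have hev : ∀ᶠ r in nhdsWithin u (Set.Iio u),
        (∑ s ∈ hJfin.toFinset.filter (fun s' => s' < u), (F (x s) - F (xm s)))
          = ∑ s ∈ hJfin.toFinset.filter (fun s' => s' ≤ r), (F (x s) - F (xm s)) := by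
      filter_upwards [hall] with r hr
      have heq : hJfin.toFinset.filter (fun s' => s' ≤ r)
          = hJfin.toFinset.filter (fun s' => s' < u) :=
        Finset.filter_congr (by intro s hs; exact hr s hs)
      rw [heq]
    exact Tendsto.congr' hev tendsto_const_nhds
  -- splitting of the jump sum at u
  have hsplit : ∀ u : ℝ,
      (∑ s ∈ hJfin.toFinset.filter (fun s' => s' ≤ u), (F (x s) - F (xm s)))
        = (∑ s ∈ hJfin.toFinset.filter (fun s' => s' < u), (F (x s) - F (xm s)))
          + (if u ∈ hJfin.toFinset then F (x u) - F (xm u) else 0) := by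
    intro u
    by_cases hu : u ∈ hJfin.toFinset
    · rw [if_pos hu]
      have heq : hJfin.toFinset.filter (fun s' => s' ≤ u) =
          insert u (hJfin.toFinset.filter (fun s' => s' < u)) := by
        ext s
        simp only [Finset.mem_filter, Finset.mem_insert]
        constructor
        · rintro ⟨h1, h2⟩
          rcases lt_or_eq_of_le h2 with h | h
          · exact Or.inr ⟨h1, h⟩
          · exact Or.inl h
        · rintro (h | ⟨h1, h2⟩)
          · exact ⟨h ▸ hu, le_of_eq h⟩
          · exact ⟨h1, le_of_lt h2⟩
      rw [heq, Finset.sum_insert (by simp)]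
      ring
    · rw [if_neg hu, add_zero]
      refine Finset.sum_congr ?_ (fun _ _ => rfl)
      ext s
      simp only [Finset.mem_filter]
      constructor
      · rintro ⟨h1, h2⟩
        rcases lt_or_eq_of_le h2 with h | h
        · exact ⟨h1, h⟩
        · exact absurd (h ▸ h1) hu
      · rintro ⟨h1, h2⟩; exact ⟨h1, le_of_lt h2⟩
  -- left limits agree with values at continuity points
  have hxm_eq : ∀ u ∈ Set.Ioc (0:ℝ) t, u ∉ hJfin.toFinset → xm u = x u := by
    intro u hu hnot
    have hcont : ContinuousAt x u := by
      by_contra hc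
      exact hnot ((hmemT u).2 ⟨hu, hc⟩)
    exact tendsto_nhds_unique (hxm u hu.1) hcont.continuousWithinAt
  -- left continuity of g
  have hg_left : ∀ u ∈ Set.Ioc (0:ℝ) t, Tendsto
      (fun r => F (x r) - (∫ s in (0:ℝ)..r, fderiv ℝ F (x s) (f (x s)))
        - ∑ s ∈ hJfin.toFinset.filter (fun s' => s' ≤ r), (F (x s) - F (xm s)))
      (nhdsWithin u (Set.Iio u))
      (nhds (F (x u) - (∫ s in (0:ℝ)..u, fderiv ℝ F (x s) (f (x s)))
        - ∑ s ∈ hJfin.toFinset.filter (fun s' => s' ≤ u), (F (x s) - F (xm s)))) := by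
    intro u hu
    have l1 : Tendsto (fun r => F (x r)) (nhdsWithin u (Set.Iio u)) (nhds (F (xm u))) :=
      (hF.continuous.tendsto _).comp (hxm u hu.1)
    have l2 : Tendsto (fun r => ∫ s in (0:ℝ)..r, fderiv ℝ F (x s) (f (x s)))
        (nhdsWithin u (Set.Iio u))
        (nhds (∫ s in (0:ℝ)..u, fderiv ℝ F (x s) (f (x s)))) := by
      rw [← nhdsWithin_Ioo_eq_nhdsLT hu.1]
      exact (hPhi_cont u ⟨le_of_lt hu.1, hu.2⟩).mono
        (fun r hr => ⟨le_of_lt hr.1, le_trans (le_of_lt hr.2) hu.2⟩)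
    have l3 := hJS_left u hu
    have hval : F (x u) - (∫ s in (0:ℝ)..u, fderiv ℝ F (x s) (f (x s)))
        - (∑ s ∈ hJfin.toFinset.filter (fun s' => s' ≤ u), (F (x s) - F (xm s)))
        = F (xm u) - (∫ s in (0:ℝ)..u, fderiv ℝ F (x s) (f (x s)))
        - ∑ s ∈ hJfin.toFinset.filter (fun s' => s' < u), (F (x s) - F (xm s)) := by
      rw [hsplit u]
      by_cases hmem : u ∈ hJfin.toFinset
      · rw [if_pos hmem]; ring
      · rw [if_neg hmem, hxm_eq u hu hmem]; ring
    rw [hval]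
    exact (l1.sub l2).sub l3
  set g : ℝ → ℝ := fun r => F (x r) - (∫ s in (0:ℝ)..r, fderiv ℝ F (x s) (f (x s)))
    - ∑ s ∈ hJfin.toFinset.filter (fun s' => s' ≤ r), (F (x s) - F (xm s)) with hgdef
  -- continuity of g on [0,t]
  have hg_cont : ContinuousOn g (Set.Icc 0 t) := by
    intro u hu
    rcases lt_or_eq_of_le hu.2 with hut | hut
    · have hR : ContinuousWithinAt g (Set.Ici u) u :=
        (hg_deriv u ⟨hu.1, hut⟩).continuousWithinAt
      rcases eq_or_lt_of_le hu.1 with h0 | h0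
      · exact hR.mono (fun r hr => (h0 ▸ hr.1 : u ≤ r))
      · have hL : ContinuousWithinAt g (Set.Iio u) u := hg_left u ⟨h0, hu.2⟩
        exact (hL.union hR).mono (by rw [Set.Iio_union_Ici]; exact Set.subset_univ _)
    · rcases eq_or_lt_of_le hu.1 with h0 | h0
      · have hsing : Set.Icc (0:ℝ) t ⊆ {u} := by
          intro r hr
          have hru : r = u := le_antisymm (hut ▸ hr.2) (h0 ▸ hr.1)
          simp [hru]
        exact (continuousWithinAt_singleton).mono hsing
      · have hL : ContinuousWithinAt g (Set.Iio u) u := hg_left u ⟨h0, hu.2⟩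
        have hpt : ContinuousWithinAt g {u} u := continuousWithinAt_singleton
        refine (hL.union hpt).mono ?_
        intro r hr
        rcases lt_or_eq_of_le (hut ▸ hr.2 : r ≤ u) with h | h
        · exact Or.inl h
        · exact Or.inr h
  -- conclude via the right-derivative constancy principle
  have hconst := constant_of_has_deriv_right_zero hg_cont
    (fun u hu => hg_deriv u hu) t (Set.right_mem_Icc.2 ht)
  have hg0 : g 0 = F (x 0) := by
    have hempty : hJfin.toFinset.filter (fun s' => s' ≤ (0:ℝ)) = ∅ :=
      Finset.filter_false_of_mem (fun s hs => not_le.2 ((hmemT s).1 hs).1.1)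
    rw [hgdef]
    simp only [intervalIntegral.integral_same, hempty, Finset.sum_empty]
    ring
  have hgt : g t = F (x t) - (∫ s in (0:ℝ)..t, fderiv ℝ F (x s) (f (x s)))
      - ∑ s ∈ hJfin.toFinset, (F (x s) - F (xm s)) := by
    have hfull : hJfin.toFinset.filter (fun s' => s' ≤ t) = hJfin.toFinset :=
      Finset.filter_true_of_mem (fun s hs => ((hmemT s).1 hs).1.2)
    rw [hgdef]
    simp only [hfull]
  have := hconst
  rw [hgt, hg0] at this
  linarith
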